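/- Let G be a topological group, K a compact subgroup equipped with its Haar probability measure dk, and E a uniformly convex complex Banach space. Let π be a representation of G on E by linear isometries such that for each v ∈ E the map g ↦ π(g)v is continuous. Let x ∈ E with ‖x‖ = 1 be such that for every g ∈ G the Bochner integral ∫_K π(k)π(g)x dk equals x. Then π(g)x = x for every g ∈ G. -/

import Mathlib

set_option autoImplicit false
open MeasureTheory

/-- Lemma 4.4: averaging over a compact subgroup and uniform
convexity force invariance. -/
theorem statement13 {G : Type*} [Group G] [TopologicalSpace G] [IsTopologicalGroup G]
    (K : Subgroup G) [CompactSpace K] [MeasurableSpace K] [BorelSpace K]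
    (μ : Measure K) [μ.IsHaarMeasure] [IsProbabilityMeasure μ]
    {E : Type*} [NormedAddCommGroup E] [NormedSpace ℂ E] [CompleteSpace E]
    [UniformConvexSpace E]
    (π : G → E →L[ℂ] E)
    (hmul : ∀ g g' : G, π (g * g') = (π g).comp (π g'))
    (hone : π 1 = ContinuousLinearMap.id ℂ E)
    (hiso : ∀ (g : G) (v : E), ‖π g v‖ = ‖v‖)
    (hcont : ∀ v : E, Continuous fun g : G => π g v)
    (x : E) (hx : ‖x‖ = 1)
    (hfix : ∀ g : G, (∫ k : K, π (k : G) (π g x) ∂μ) = x) :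
    ∀ g : G, π g x = x := by
  intro g
  by_contra hne
  set f : K → E := fun k => π (k : G) (π g x) with hf
  have hfcont : Continuous f := (hcont (π g x)).comp continuous_subtype_val
  have hfnorm : ∀ k : K, ‖f k‖ = 1 := fun k => by
    simp only [hf, hiso, hx]
  have hεpos : (0:ℝ) < ‖π g x - x‖ := by
    rw [norm_pos_iff]; exact sub_ne_zero_of_ne hne
  set ε := ‖π g x - x‖ with hε
  obtain ⟨δ, hδpos, hδ⟩ := exists_forall_sphere_dist_add_le_two_sub E (half_pos hεpos)
  set U : Set K := {k | ε/2 < ‖f k - x‖} with hU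
  have hUopen : IsOpen U := isOpen_lt continuous_const ((hfcont.sub continuous_const).norm)
  have h1U : (1:K) ∈ U := by
    have : f (1:K) = π g x := by
      simp [hf, hone]
    simp only [hU, Set.mem_setOf_eq, this, ← hε]
    linarith
  have hμU : 0 < μ U := hUopen.measure_pos μ ⟨1, h1U⟩
  have hfsm : StronglyMeasurable f := by
    borelize E
    rw [stronglyMeasurable_iff_measurable_separable]
    exact ⟨hfcont.measurable, (isCompact_range hfcont).isSeparable⟩
  have hfint : Integrable f μ :=
    ⟨hfsm.aestronglyMeasurable,
      HasFiniteIntegral.of_bounded (C := 1) (ae_of_all _ fun k => (hfnorm k).le)⟩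
  have hgint : Integrable (fun k => f k + x) μ := hfint.add (integrable_const x)
  have hInt : (∫ k, (f k + x) ∂μ) = x + x := by
    rw [integral_add hfint (integrable_const x), hfix g, integral_const, probReal_univ,
      one_smul]
  have h2le : (2:ℝ) ≤ ∫ k, ‖f k + x‖ ∂μ := by
    calc (2:ℝ) = ‖x + x‖ := by
          rw [← two_smul ℝ x, norm_smul]; simp [hx]
      _ = ‖∫ k, (f k + x) ∂μ‖ := by rw [hInt]
      _ ≤ ∫ k, ‖f k + x‖ ∂μ := norm_integral_le_integral_norm _
  have hnormle : ∀ k : K, ‖f k + x‖ ≤ 2 := fun k => by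
    calc ‖f k + x‖ ≤ ‖f k‖ + ‖x‖ := norm_add_le _ _
      _ = 2 := by rw [hfnorm k, hx]; norm_num
  have hUbound : ∀ k ∈ U, ‖f k + x‖ ≤ 2 - δ := fun k hk =>
    hδ (hfnorm k) hx (le_of_lt hk)
  have hUm : MeasurableSet U := hUopen.measurableSet
  have hintnorm : Integrable (fun k => ‖f k + x‖) μ := hgint.norm
  have hsplit : (∫ k, ‖f k + x‖ ∂μ)
      = (∫ k in U, ‖f k + x‖ ∂μ) + ∫ k in Uᶜ, ‖f k + x‖ ∂μ := by
    rw [← integral_add_compl hUm hintnorm]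
  have haU : (∫ k in U, ‖f k + x‖ ∂μ) ≤ (2 - δ) * (μ U).toReal := by
    calc (∫ k in U, ‖f k + x‖ ∂μ) ≤ ∫ _ in U, (2 - δ) ∂μ :=
          setIntegral_mono_on hintnorm.integrableOn (integrableOn_const
            (measure_ne_top μ U)) hUm hUbound
      _ = (μ U).toReal * (2 - δ) := by rw [setIntegral_const]; rfl
      _ = (2 - δ) * (μ U).toReal := mul_comm _ _
  have haUc : (∫ k in Uᶜ, ‖f k + x‖ ∂μ) ≤ 2 * (μ Uᶜ).toReal := by
    calc (∫ k in Uᶜ, ‖f k + x‖ ∂μ) ≤ ∫ _ in Uᶜ, (2:ℝ) ∂μ :=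
          setIntegral_mono_on hintnorm.integrableOn (integrableOn_const
            (measure_ne_top μ Uᶜ)) hUm.compl (fun k _ => hnormle k)
      _ = (μ Uᶜ).toReal * 2 := by rw [setIntegral_const]; rfl
      _ = 2 * (μ Uᶜ).toReal := mul_comm _ _
  have hsum : (μ U).toReal + (μ Uᶜ).toReal = 1 := by
    rw [← ENNReal.toReal_add (measure_ne_top μ U) (measure_ne_top μ Uᶜ),
      measure_add_measure_compl hUm, measure_univ, ENNReal.toReal_one]
  have hμUr : 0 < (μ U).toReal := ENNReal.toReal_pos hμU.ne' (measure_ne_top μ U)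
  nlinarith [hsplit, haU, haUc, h2le]
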